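/- Fix L ∈ ℕ and consider, over all real x, the product U(x) = V₀ · ∏_{j=1}^{L} diag(e^{-ix_j λ₀}, e^{-ix_j λ₁}) V_j with λ₀ = 1/2, λ₁ = -1/2, where x₁,...,x_L are coordinates of a vector x ∈ ℝᵈ each appearing exactly K = L/d times, and V_j are fixed 2×2 complex matrices. Then for any 2×2 matrix M, the function f(x) = ⟨0| U(x)† M U(x) |0⟩ can be written as f(x) = Σ_{ω ∈ Ω} c_ω e^{i ω·x}, where Ω = {-K, ..., 0, ..., K}ᵈ and c_ω ∈ ℂ depend only on the V_j and M. -/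

import Mathlib

open Complex Matrix

noncomputable def RZenc (t : ℝ) : Matrix (Fin 2) (Fin 2) ℂ :=
  !![Complex.exp (-(Complex.I * t) / 2), 0; 0, Complex.exp (Complex.I * t / 2)]

noncomputable def chard {d : ℕ} (ν : Fin d → ℤ) (x : Fin d → ℝ) : ℂ :=
  Complex.exp (Complex.I * (∑ m : Fin d, (ν m : ℂ) * (x m : ℂ)))

lemma chard_add {d : ℕ} (ν μ : Fin d → ℤ) (x : Fin d → ℝ) :
    chard (ν + μ) x = chard ν x * chard μ x := by
  unfold chard
  rw [← Complex.exp_add]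
  congr 1
  rw [← mul_add, ← Finset.sum_add_distrib]
  refine congrArg _ (Finset.sum_congr rfl fun m _ => ?_)
  push_cast [Pi.add_apply]
  ring

lemma chard_conj {d : ℕ} (ν : Fin d → ℤ) (x : Fin d → ℝ) :
    (starRingEnd ℂ) (chard ν x) = chard (-ν) x := by
  unfold chard
  rw [← Complex.exp_conj]
  congr 1
  simp only [_root_.map_mul, map_sum, Complex.conj_I, Complex.conj_ofReal, map_intCast]
  have hs : ∑ m : Fin d, ((-ν) m : ℂ) * (x m : ℂ) = -∑ m : Fin d, (ν m : ℂ) * (x m : ℂ) := by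
    rw [← Finset.sum_neg_distrib]
    exact Finset.sum_congr rfl fun m _ => by push_cast [Pi.neg_apply]; ring
  rw [hs]; ring

def TP {d : ℕ} (lo hi : Fin d → ℤ) (f : (Fin d → ℝ) → ℂ) : Prop :=
  ∃ c : (Fin d → ℤ) → ℂ, ∀ x, f x = ∑ ν ∈ Finset.Icc lo hi, c ν * chard ν x

lemma TP_mono {d : ℕ} {lo hi lo' hi' : Fin d → ℤ} {f} (h1 : lo' ≤ lo) (h2 : hi ≤ hi')
    (hf : TP lo hi f) : TP lo' hi' f := by
  classical
  obtain ⟨c, hc⟩ := hf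
  refine ⟨fun ν => if ν ∈ Finset.Icc lo hi then c ν else 0, fun x => ?_⟩
  rw [hc x]
  calc ∑ ν ∈ Finset.Icc lo hi, c ν * chard ν x
      = ∑ ν ∈ Finset.Icc lo hi,
          (if ν ∈ Finset.Icc lo hi then c ν else 0) * chard ν x :=
        Finset.sum_congr rfl fun ν hν => by rw [if_pos hν]
    _ = ∑ ν ∈ Finset.Icc lo' hi',
          (if ν ∈ Finset.Icc lo hi then c ν else 0) * chard ν x :=
        Finset.sum_subset (Finset.Icc_subset_Icc h1 h2)
          (fun ν _ hν => by rw [if_neg hν, zero_mul])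

lemma TP_zero {d : ℕ} (lo hi : Fin d → ℤ) : TP lo hi (fun _ => (0:ℂ)) :=
  ⟨0, fun x => by simp⟩

lemma TP_add {d : ℕ} {lo hi : Fin d → ℤ} {f g} (hf : TP lo hi f) (hg : TP lo hi g) :
    TP lo hi (fun x => f x + g x) := by
  obtain ⟨c, hc⟩ := hf; obtain ⟨c', hc'⟩ := hg
  refine ⟨c + c', fun x => ?_⟩
  show f x + g x = _
  rw [hc, hc', ← Finset.sum_add_distrib]
  exact Finset.sum_congr rfl fun ν _ => by simp [add_mul]

lemma TP_sum {d : ℕ} {lo hi : Fin d → ℤ} {ι : Type*} (s : Finset ι)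
    (f : ι → (Fin d → ℝ) → ℂ) (h : ∀ i ∈ s, TP lo hi (f i)) :
    TP lo hi (fun x => ∑ i ∈ s, f i x) := by
  classical
  induction s using Finset.induction with
  | empty => simpa using TP_zero lo hi
  | insert a s hne ih =>
    simp only [Finset.sum_insert hne]
    exact TP_add (h a (by simp)) (ih fun i hi => h i (by simp [hi]))

lemma TP_single {d : ℕ} (μ : Fin d → ℤ) (a : ℂ) : TP μ μ (fun x => a * chard μ x) :=
  ⟨fun _ => a, fun x => by rw [Finset.Icc_self, Finset.sum_singleton]⟩

lemma TP_const {d : ℕ} (a : ℂ) : TP (0 : Fin d → ℤ) 0 (fun _ => a) := by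
  refine ⟨fun _ => a, fun x => ?_⟩
  rw [Finset.Icc_self, Finset.sum_singleton]
  simp [chard]

lemma TP_mul {d : ℕ} {lo hi lo' hi' : Fin d → ℤ} {f g} (hf : TP lo hi f) (hg : TP lo' hi' g) :
    TP (lo + lo') (hi + hi') (fun x => f x * g x) := by
  classical
  obtain ⟨c, hc⟩ := hf; obtain ⟨c', hc'⟩ := hg
  refine ⟨fun μ => ∑ ν ∈ Finset.Icc lo hi,
    if μ - ν ∈ Finset.Icc lo' hi' then c ν * c' (μ - ν) else 0, fun x => ?_⟩
  show f x * g x = _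
  rw [hc, hc', Finset.sum_mul_sum]
  simp only [Finset.sum_mul]
  conv_rhs => rw [Finset.sum_comm]
  refine Finset.sum_congr rfl fun ν hν => ?_
  have hinj : ∀ a ∈ Finset.Icc lo' hi', ∀ b ∈ Finset.Icc lo' hi',
      ν + a = ν + b → a = b := fun a _ b _ h => by
    simpa using add_left_cancel h
  rw [Finset.mem_Icc] at hν
  calc ∑ j ∈ Finset.Icc lo' hi', c ν * chard ν x * (c' j * chard j x)
      = ∑ μ ∈ (Finset.Icc lo' hi').image (fun ν' => ν + ν'),
          (if μ - ν ∈ Finset.Icc lo' hi' then c ν * c' (μ - ν) else 0) * chard μ x := by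
        rw [Finset.sum_image hinj]
        refine Finset.sum_congr rfl fun ν' hν' => ?_
        rw [show ν + ν' - ν = ν' by ring, if_pos hν', chard_add]
        ring
    _ = ∑ μ ∈ Finset.Icc (lo + lo') (hi + hi'),
          (if μ - ν ∈ Finset.Icc lo' hi' then c ν * c' (μ - ν) else 0) * chard μ x := by
        refine Finset.sum_subset ?_ ?_
        · intro μ hμ
          rw [Finset.mem_image] at hμ
          obtain ⟨ν', hν', rfl⟩ := hμ
          rw [Finset.mem_Icc] at hν' ⊢
          exact ⟨add_le_add hν.1 hν'.1, add_le_add hν.2 hν'.2⟩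
        · intro μ _ hμ
          have : μ - ν ∉ Finset.Icc lo' hi' := fun h => hμ
            (Finset.mem_image.2 ⟨μ - ν, h, by ring⟩)
          rw [if_neg this, zero_mul]

lemma TP_conj {d : ℕ} {lo hi : Fin d → ℤ} {f} (hf : TP lo hi f) :
    TP (-hi) (-lo) (fun x => (starRingEnd ℂ) (f x)) := by
  obtain ⟨c, hc⟩ := hf
  refine ⟨fun μ => (starRingEnd ℂ) (c (-μ)), fun x => ?_⟩
  show (starRingEnd ℂ) (f x) = _
  rw [hc, map_sum]
  refine Finset.sum_nbij' (fun ν => -ν) (fun ν => -ν) ?_ ?_ ?_ ?_ ?_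
  · intro ν hν; rw [Finset.mem_Icc] at *
    exact ⟨by simpa using neg_le_neg hν.2, by simpa using neg_le_neg hν.1⟩
  · intro ν hν; rw [Finset.mem_Icc] at *
    exact ⟨by simpa using neg_le_neg hν.2, by simpa using neg_le_neg hν.1⟩
  · intro ν _; simp
  · intro ν _; simp
  · intro ν _; simp [_root_.map_mul, chard_conj]

noncomputable def Dm (t : ℝ) : Matrix (Fin 2) (Fin 2) ℂ :=
  !![1, 0; 0, Complex.exp (Complex.I * t)]

def uf {d : ℕ} (m₀ : Fin d) : Fin d → ℤ := fun m => if m₀ = m then 1 else 0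

lemma chard_uf {d : ℕ} (m₀ : Fin d) (x : Fin d → ℝ) :
    chard (uf m₀) x = Complex.exp (Complex.I * x m₀) := by
  unfold chard uf
  congr 2
  rw [Finset.sum_eq_single m₀]
  · simp
  · intro m _ hm; simp [Ne.symm hm]
  · simp

lemma TP_Dm_entry {d : ℕ} (m₀ : Fin d) (W : Matrix (Fin 2) (Fin 2) ℂ) (a k : Fin 2) :
    TP (0 : Fin d → ℤ) (uf m₀) (fun x => (Dm (x m₀) * W) a k) := by
  have key : ∀ x : Fin d → ℝ, (Dm (x m₀) * W) a k =
      (if a = 0 then W 0 k else 0) + (if a = 1 then W 1 k else 0) * chard (uf m₀) x := by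
    intro x
    rw [chard_uf]
    fin_cases a <;> simp [Dm, Matrix.mul_apply, Fin.sum_univ_two, mul_comm]
  have h1 : TP (0 : Fin d → ℤ) (uf m₀) (fun _ => (if a = 0 then W 0 k else 0)) := by
    refine TP_mono le_rfl ?_ (TP_const _)
    intro m; unfold uf; split <;> simp
  have h2 : TP (0 : Fin d → ℤ) (uf m₀)
      (fun x => (if a = 1 then W 1 k else 0) * chard (uf m₀) x) := by
    refine TP_mono ?_ le_rfl (TP_single _ _)
    intro m; unfold uf; split <;> simp
  have h := TP_add h1 h2
  simp only [← key] at h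
  exact h

noncomputable def dprod {d : ℕ} (l : List (Fin d × Matrix (Fin 2) (Fin 2) ℂ))
    (x : Fin d → ℝ) : Matrix (Fin 2) (Fin 2) ℂ :=
  (l.map fun p => Dm (x p.1) * p.2).prod

abbrev cnt {d : ℕ} (l : List (Fin d × Matrix (Fin 2) (Fin 2) ℂ)) : Fin d → ℤ :=
  fun m => ((l.map Prod.fst).count m : ℤ)

lemma TP_dprod_entry {d : ℕ} (l : List (Fin d × Matrix (Fin 2) (Fin 2) ℂ)) (a b : Fin 2) :
    TP (0 : Fin d → ℤ) (cnt l) (fun x => dprod l x a b) := by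
  classical
  induction l generalizing a b with
  | nil =>
    have h0 : cnt ([] : List (Fin d × Matrix (Fin 2) (Fin 2) ℂ)) = 0 := by
      funext m; simp [cnt]
    rw [h0]
    have : ∀ x : Fin d → ℝ, dprod [] x a b = ((1 : Matrix (Fin 2) (Fin 2) ℂ) a b) := by
      intro x; simp [dprod]
    simp only [this]
    exact TP_const _
  | cons p l ih =>
    have hcnt : cnt (p :: l) = uf p.1 + cnt l := by
      funext m
      simp only [cnt, List.map_cons, List.count_cons, uf, Pi.add_apply, beq_iff_eq]
      push_cast
      rw [add_comm]
    have key : ∀ x : Fin d → ℝ, dprod (p :: l) x a b =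
        ∑ k : Fin 2, (Dm (x p.1) * p.2) a k * dprod l x k b := by
      intro x
      rw [dprod, List.map_cons, List.prod_cons, Matrix.mul_apply]
      rfl
    have h : TP (0 : Fin d → ℤ) (uf p.1 + cnt l)
        (fun x => ∑ k : Fin 2, (Dm (x p.1) * p.2) a k * dprod l x k b) := by
      refine TP_sum _ _ fun k _ => ?_
      have h2 := TP_mul (TP_Dm_entry p.1 p.2 a k) (ih k b)
      simpa using h2
    rw [hcnt]
    simp only [← key] at h
    exact h

lemma RZenc_eq (t : ℝ) :
    RZenc t = Complex.exp (-(Complex.I * t) / 2) • Dm t := by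
  ext i j
  fin_cases i <;> fin_cases j <;>
    simp [RZenc, Dm, Matrix.smul_apply, ← Complex.exp_add]
  · congr 1; ring

noncomputable def sfac {d : ℕ} (l : List (Fin d × Matrix (Fin 2) (Fin 2) ℂ))
    (x : Fin d → ℝ) : ℂ :=
  (l.map fun p => Complex.exp (-(Complex.I * (x p.1 : ℝ)) / 2)).prod

lemma rprod_eq {d : ℕ} (l : List (Fin d × Matrix (Fin 2) (Fin 2) ℂ)) (x : Fin d → ℝ) :
    (l.map fun p => RZenc (x p.1) * p.2).prod = sfac l x • dprod l x := by
  induction l with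
  | nil => simp [sfac, dprod]
  | cons p l ih =>
    simp only [sfac, dprod, List.map_cons, List.prod_cons] at ih ⊢
    rw [ih, RZenc_eq, smul_mul_assoc, smul_mul_assoc, mul_smul_comm, smul_smul]

lemma sfac_unit {d : ℕ} (l : List (Fin d × Matrix (Fin 2) (Fin 2) ℂ)) (x : Fin d → ℝ) :
    (starRingEnd ℂ) (sfac l x) * sfac l x = 1 := by
  induction l with
  | nil => simp [sfac]
  | cons p l ih =>
    simp only [sfac, List.map_cons, List.prod_cons, _root_.map_mul] at *
    rw [mul_mul_mul_comm, ih, mul_one]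
    rw [← Complex.exp_conj, ← Complex.exp_add]
    have : (starRingEnd ℂ) (-(Complex.I * ((x p.1 : ℝ) : ℂ)) / 2) +
        (-(Complex.I * ((x p.1 : ℝ) : ℂ)) / 2) = 0 := by
      have h2 : (starRingEnd ℂ) (2 : ℂ) = 2 := by
        rw [show ((2:ℂ)) = ((2:ℝ):ℂ) by norm_num, Complex.conj_ofReal]
      rw [map_div₀, map_neg, _root_.map_mul, Complex.conj_I, Complex.conj_ofReal, h2]
      ring
    rw [this, Complex.exp_zero]

lemma count_ofFn' {α : Type*} [DecidableEq α] :
    ∀ {n : ℕ} (f : Fin n → α) (a : α),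
      (List.ofFn f).count a = (Finset.univ.filter fun j => f j = a).card := by
  intro n
  induction n with
  | zero => intro f a; simp
  | succ n ih =>
    intro f a
    rw [List.ofFn_succ, List.count_cons, ih]
    rw [Finset.card_filter, Finset.card_filter, Fin.sum_univ_succ]
    simp [beq_iff_eq, add_comm]

/-- a single-qubit data re-uploading QNN on `d`-dimensional data, where the
`m`-th coordinate is encoded exactly `K` times via `R_Z` (so `L = K·d`), computes a
multivariate trigonometric polynomial `f(x) = Σ_{ω ∈ {-K,…,K}ᵈ} c_ω e^{i ω·x}`, with
coefficients depending only on the trainable matrices `V_j` and the observable `M`. -/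
theorem stmt15 (d K L : ℕ) (hL : L = K * d) (idx : Fin L → Fin d)
    (hidx : ∀ m : Fin d, (Finset.univ.filter fun j : Fin L => idx j = m).card = K)
    (V : Fin (L + 1) → Matrix (Fin 2) (Fin 2) ℂ) (M : Matrix (Fin 2) (Fin 2) ℂ) :
    ∃ c : (Fin d → ℤ) → ℂ,
      ∀ x : Fin d → ℝ,
        (((V 0 * (List.ofFn fun j : Fin L => RZenc (x (idx j)) * V j.succ).prod)ᴴ * M *
              (V 0 * (List.ofFn fun j : Fin L => RZenc (x (idx j)) * V j.succ).prod)) 0 0) =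
          ∑ ω ∈ Finset.Icc (fun _ : Fin d => -(K : ℤ)) (fun _ : Fin d => (K : ℤ)),
            c ω * Complex.exp (Complex.I * (∑ m : Fin d, (ω m : ℂ) * (x m : ℂ))) := by
  classical
  set l : List (Fin d × Matrix (Fin 2) (Fin 2) ℂ) :=
    List.ofFn (fun j : Fin L => (idx j, V j.succ)) with hl
  have hlist : ∀ x : Fin d → ℝ,
      (List.ofFn fun j : Fin L => RZenc (x (idx j)) * V j.succ)
        = l.map (fun p => RZenc (x p.1) * p.2) := by
    intro x; rw [hl, List.map_ofFn]; rfl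
  have hcntK : cnt l = fun _ : Fin d => (K : ℤ) := by
    funext m
    have h1 : l.map Prod.fst = List.ofFn idx := by rw [hl, List.map_ofFn]; rfl
    show ((l.map Prod.fst).count m : ℤ) = K
    rw [h1, count_ofFn', hidx m]
  -- TP for entries of B x := V 0 * dprod l x
  have hB : ∀ a : Fin 2, TP (0 : Fin d → ℤ) (cnt l)
      (fun x => (V 0 * dprod l x) a 0) := by
    intro a
    have key : ∀ x : Fin d → ℝ, (V 0 * dprod l x) a 0
        = ∑ k : Fin 2, V 0 a k * dprod l x k 0 := fun x => Matrix.mul_apply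
    simp only [key]
    refine TP_sum _ _ fun k _ => ?_
    have := TP_mul (TP_const (d := d) (V 0 a k)) (TP_dprod_entry l k 0)
    simpa using this
  -- TP for the (0,0) entry of Bᴴ * M * B
  have hf : TP (fun _ : Fin d => -(K : ℤ)) (fun _ : Fin d => (K : ℤ))
      (fun x => ((V 0 * dprod l x)ᴴ * M * (V 0 * dprod l x)) 0 0) := by
    have key : ∀ x : Fin d → ℝ,
        ((V 0 * dprod l x)ᴴ * M * (V 0 * dprod l x)) 0 0
          = ∑ b : Fin 2, (∑ a : Fin 2,
              (starRingEnd ℂ) ((V 0 * dprod l x) a 0) * M a b) *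
            (V 0 * dprod l x) b 0 := by
      intro x
      rw [Matrix.mul_apply]
      refine Finset.sum_congr rfl fun b _ => ?_
      rw [Matrix.mul_apply]
      congr 1
    simp only [key]
    have hneg : -(cnt l) = (fun _ : Fin d => -(K : ℤ)) := by rw [hcntK]; rfl
    refine TP_sum _ _ fun b _ => ?_
    have hsum : TP (fun _ : Fin d => -(K : ℤ)) (0 : Fin d → ℤ)
        (fun x => ∑ a : Fin 2, (starRingEnd ℂ) ((V 0 * dprod l x) a 0) * M a b) := by
      refine TP_sum _ _ fun a _ => ?_
      have hconj := TP_conj (hB a)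
      rw [hneg] at hconj
      have := TP_mul hconj (TP_const (d := d) (M a b))
      simpa using this
    have := TP_mul hsum (hB b)
    rw [hcntK] at this
    simpa using this
  obtain ⟨c, hc⟩ := hf
  refine ⟨c, fun x => ?_⟩
  rw [hlist x, rprod_eq, mul_smul_comm]
  rw [Matrix.conjTranspose_smul, Matrix.smul_mul, Matrix.smul_mul, Matrix.mul_smul,
    smul_smul, Matrix.smul_apply]
  rw [Complex.star_def, sfac_unit, one_smul]
  exact hc x
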